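/- Let κ, γ = κ*κ be as follows: κ is Hilbert–Schmidt on L^2(ℝ^d) with kernel κ(z,x), ρ_γ(x) = ∫|κ(z,x)|² dz, and Jκ Hilbert–Schmidt with kernel (Jκ)(z,x); set ρ_{Jγ} := ρ_{(Jκ)*κ} + ρ_{κ*(Jκ)}. Then for β ≥ 1/2, ∫_{ℝ^d} ρ_γ(x)^{2β−1} ρ_{Jγ}(x)² dx ≤ 4 ‖κ‖_{L^2_r L^∞_c}^{4β} ‖Jκ‖_{I^2}², where ‖κ‖_{L^2_r L^∞_c} is the mixed norm of the kernel in relative/center coordinates and ‖Jκ‖_{I^2}² = ∫∫ |(Jκ)(z,x)|² dz dx. -/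

import Mathlib

open MeasureTheory
open scoped ENNReal

open Filter in
/-- The essential supremum of a jointly measurable `ℝ≥0∞`-valued function, as a function of the
parameter, is measurable. -/
private lemma measurable_essSup_param {α β : Type*} [MeasurableSpace α] [MeasurableSpace β]
    (μ : Measure β) [SFinite μ] {f : α × β → ℝ≥0∞} (hf : Measurable f) :
    Measurable fun a => essSup (fun b => f (a, b)) μ := by
  classical
  have key : ∀ a, essSup (fun b => f (a, b)) μ =
      ⨆ q : ℚ, (if μ {b | (((q : ℝ).toNNReal : ℝ≥0∞)) < f (a, b)} = 0 then 0
        else (((q : ℝ).toNNReal : ℝ≥0∞))) := by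
    intro a
    set h : β → ℝ≥0∞ := fun b => f (a, b) with hh
    apply le_antisymm
    · rw [essSup_eq_sInf]
      apply sInf_le
      show μ {x | _ < h x} = 0
      set T : ℝ≥0∞ := ⨆ q : ℚ, (if μ {b | (((q : ℝ).toNNReal : ℝ≥0∞)) < h b} = 0 then 0
        else (((q : ℝ).toNNReal : ℝ≥0∞))) with hT
      have hsub : {x | T < h x} ⊆ ⋃ q : ℚ,
          (if μ {b | (((q : ℝ).toNNReal : ℝ≥0∞)) < h b} = 0
            then {b | (((q : ℝ).toNNReal : ℝ≥0∞)) < h b} else ∅) := by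
        intro x hx
        obtain ⟨q, hq0, hq1, hq2⟩ := ENNReal.lt_iff_exists_rat_btwn.mp hx
        have hnull : μ {b | (((q : ℝ).toNNReal : ℝ≥0∞)) < h b} = 0 := by
          by_contra hne
          have : (((q : ℝ).toNNReal : ℝ≥0∞)) ≤ T := by
            rw [hT]
            refine le_trans ?_ (le_iSup _ q)
            rw [if_neg hne]
          exact absurd (lt_of_le_of_lt this hq1) (lt_irrefl _)
        refine Set.mem_iUnion.mpr ⟨q, ?_⟩
        rw [if_pos hnull]
        exact hq2
      refine measure_mono_null hsub (measure_iUnion_null fun q => ?_)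
      split
      · assumption
      · exact measure_empty
    · refine iSup_le fun q => ?_
      split
      · exact zero_le
      · rename_i hne
        by_contra hcon
        push_neg at hcon
        have hnull : μ {b | (((q : ℝ).toNNReal : ℝ≥0∞)) < h b} = 0 := by
          refine measure_mono_null (fun b hb => ?_) (meas_essSup_lt (f := h))
          exact lt_trans hcon hb
        exact hne hnull
  have hmq : ∀ q : ℚ, Measurable fun a =>
      (if μ {b | (((q : ℝ).toNNReal : ℝ≥0∞)) < f (a, b)} = 0 then (0 : ℝ≥0∞)
        else (((q : ℝ).toNNReal : ℝ≥0∞))) := by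
    intro q
    have hs : MeasurableSet {p : α × β | (((q : ℝ).toNNReal : ℝ≥0∞)) < f p} :=
      measurableSet_lt measurable_const hf
    have hm : Measurable fun a => μ (Prod.mk a ⁻¹' {p : α × β | (((q : ℝ).toNNReal : ℝ≥0∞)) < f p}) :=
      measurable_measure_prodMk_left hs
    exact Measurable.ite (hm (measurableSet_singleton 0)) measurable_const measurable_const
  simp only [key]
  exact Measurable.iSup hmq

set_option maxHeartbeats 1000000 in
/-- Key estimate for the exchange term: for `β ≥ 1/2`,
`∫ ρ_γ^{2β-1} ρ_{Jγ}² dx ≤ 4 ‖κ‖_{L²_r L^∞_c}^{4β} ‖Jκ‖_{I²}²`, where `γ = κ*κ`,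
`ρ_γ(x) = ∫ |κ(z,x)|² dz` and `ρ_{Jγ} = ρ_{(Jκ)*κ} + ρ_{κ*(Jκ)}`. -/
theorem stmt_17 (d : ℕ) (β : ℝ) (hβ : 1 / 2 ≤ β)
    (κ Jκ : EuclideanSpace ℝ (Fin d) → EuclideanSpace ℝ (Fin d) → ℂ)
    (hκ : Measurable (Function.uncurry κ)) (hJκ : Measurable (Function.uncurry Jκ))
    (hL2 : ∀ x, MemLp (fun z => κ z x) 2 volume ∧ MemLp (fun z => Jκ z x) 2 volume) :
    (∫⁻ x, (∫⁻ z, (‖κ z x‖₊ : ℝ≥0∞) ^ 2) ^ (2 * β - 1) *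
        (‖∫ z, ((starRingEnd ℂ) (Jκ z x) * κ z x +
          (starRingEnd ℂ) (κ z x) * Jκ z x)‖₊ : ℝ≥0∞) ^ 2) ≤
      4 * ((∫⁻ r, (eLpNorm (fun c => κ (c - (2:ℝ)⁻¹ • r) (c + (2:ℝ)⁻¹ • r)) ∞ volume) ^ 2) ^
          (1/2 : ℝ)) ^ (4 * β) *
        ∫⁻ x, ∫⁻ z, (‖Jκ z x‖₊ : ℝ≥0∞) ^ 2 := by
  classical
  -- the kernel in relative/center coordinates, and the mixed norm ingredients
  set f : EuclideanSpace ℝ (Fin d) → (EuclideanSpace ℝ (Fin d)) → ℝ≥0∞ :=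
    fun r c => (‖κ (c - (2:ℝ)⁻¹ • r) (c + (2:ℝ)⁻¹ • r)‖₊ : ℝ≥0∞) with hf
  have hfm : Measurable (Function.uncurry f) := by
    exact Measurable.enorm (f := fun p : EuclideanSpace ℝ (Fin d) × EuclideanSpace ℝ (Fin d) =>
      κ (p.2 - (2:ℝ)⁻¹ • p.1) (p.2 + (2:ℝ)⁻¹ • p.1))
      (hκ.comp ((measurable_snd.sub (measurable_fst.const_smul (2:ℝ)⁻¹)).prodMk
      (measurable_snd.add (measurable_fst.const_smul (2:ℝ)⁻¹))))
  set g : EuclideanSpace ℝ (Fin d) → ℝ≥0∞ :=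
    fun r => eLpNorm (fun c => κ (c - (2:ℝ)⁻¹ • r) (c + (2:ℝ)⁻¹ • r)) ∞ volume with hg
  have hg_essSup : ∀ r, g r = essSup (fun c => f r c) volume := by
    intro r
    simp only [hg, hf, eLpNorm_exponent_top, eLpNormEssSup]
    rfl
  have hgm : Measurable g := by
    have h1 : g = fun r => essSup (fun c => Function.uncurry f (r, c)) volume :=
      funext hg_essSup
    rw [h1]
    exact measurable_essSup_param volume hfm
  set N : ℝ≥0∞ := ∫⁻ r, (g r) ^ 2 with hN
  -- each slice of the "bad set" is null
  have hslice : ∀ r : (EuclideanSpace ℝ (Fin d)), volume {x : EuclideanSpace ℝ (Fin d) | g r < f r (x - (2:ℝ)⁻¹ • r)} = 0 := by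
    intro r
    have h0 : volume {c : EuclideanSpace ℝ (Fin d) | g r < f r c} = 0 := by
      have hae : ∀ᵐ c : (EuclideanSpace ℝ (Fin d)), f r c ≤ g r := by
        rw [hg_essSup r]
        exact ae_le_essSup
      rw [ae_iff] at hae
      simpa [not_le] using hae
    have hmp : MeasurePreserving (fun x : EuclideanSpace ℝ (Fin d) => x - (2:ℝ)⁻¹ • r) volume volume := by
      have := measurePreserving_add_right (volume : Measure (EuclideanSpace ℝ (Fin d))) (-((2:ℝ)⁻¹ • r))
      simpa [sub_eq_add_neg] using this
    have hfr' := hfm.comp (measurable_prodMk_left (x := r))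
    have hfr : Measurable fun c => f r c := hfr'
    have hset : MeasurableSet {c : EuclideanSpace ℝ (Fin d) | g r < f r c} :=
      measurableSet_lt measurable_const hfr
    calc volume {x : EuclideanSpace ℝ (Fin d) | g r < f r (x - (2:ℝ)⁻¹ • r)}
        = volume ((fun x : EuclideanSpace ℝ (Fin d) => x - (2:ℝ)⁻¹ • r) ⁻¹' {c : EuclideanSpace ℝ (Fin d) | g r < f r c}) := rfl
      _ = volume {c : EuclideanSpace ℝ (Fin d) | g r < f r c} := hmp.measure_preimage hset.nullMeasurableSet
      _ = 0 := h0
  -- hence the bad set is null in the product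
  have hbadset : MeasurableSet {p : (EuclideanSpace ℝ (Fin d)) × (EuclideanSpace ℝ (Fin d)) | g p.1 < f p.1 (p.2 - (2:ℝ)⁻¹ • p.1)} := by
    have hm1 : Measurable fun p : (EuclideanSpace ℝ (Fin d)) × (EuclideanSpace ℝ (Fin d)) =>
        (p.1, p.2 - (2:ℝ)⁻¹ • p.1) :=
      measurable_fst.prodMk (measurable_snd.sub (measurable_fst.const_smul (2:ℝ)⁻¹))
    have hm2 := hfm.comp hm1
    have hm3 : Measurable fun p : (EuclideanSpace ℝ (Fin d)) × (EuclideanSpace ℝ (Fin d)) =>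
        f p.1 (p.2 - (2:ℝ)⁻¹ • p.1) := hm2
    have hg2 : Measurable fun p : (EuclideanSpace ℝ (Fin d)) × (EuclideanSpace ℝ (Fin d)) =>
        g p.1 := hgm.comp measurable_fst
    exact measurableSet_lt hg2 hm3
  have hprod : (volume.prod volume) {p : (EuclideanSpace ℝ (Fin d)) × (EuclideanSpace ℝ (Fin d)) | g p.1 < f p.1 (p.2 - (2:ℝ)⁻¹ • p.1)} = 0 := by
    rw [Measure.measure_prod_null hbadset]
    exact Filter.Eventually.of_forall fun r => hslice r
  have hswap : (volume.prod volume) {p : (EuclideanSpace ℝ (Fin d)) × (EuclideanSpace ℝ (Fin d)) | g p.2 < f p.2 (p.1 - (2:ℝ)⁻¹ • p.2)} = 0 := by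
    have hsw : {p : (EuclideanSpace ℝ (Fin d)) × (EuclideanSpace ℝ (Fin d)) | g p.2 < f p.2 (p.1 - (2:ℝ)⁻¹ • p.2)} =
        Prod.swap ⁻¹' {p : (EuclideanSpace ℝ (Fin d)) × (EuclideanSpace ℝ (Fin d)) | g p.1 < f p.1 (p.2 - (2:ℝ)⁻¹ • p.1)} := rfl
    rw [hsw]
    calc (volume.prod volume) (Prod.swap ⁻¹' {p : (EuclideanSpace ℝ (Fin d)) × (EuclideanSpace ℝ (Fin d)) | g p.1 < f p.1 (p.2 - (2:ℝ)⁻¹ • p.1)})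
        = (Measure.map Prod.swap (volume.prod volume))
            {p : (EuclideanSpace ℝ (Fin d)) × (EuclideanSpace ℝ (Fin d)) | g p.1 < f p.1 (p.2 - (2:ℝ)⁻¹ • p.1)} :=
          (Measure.map_apply measurable_swap hbadset).symm
      _ = (volume.prod volume) {p : (EuclideanSpace ℝ (Fin d)) × (EuclideanSpace ℝ (Fin d)) | g p.1 < f p.1 (p.2 - (2:ℝ)⁻¹ • p.1)} := by
          rw [Measure.prod_swap]
      _ = 0 := hprod
  have hae1 := Measure.measure_ae_null_of_prod_null hswap
  -- the mixed-norm bound on `ρ_γ`, almost everywhere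
  have hρ : ∀ᵐ x : (EuclideanSpace ℝ (Fin d)), (∫⁻ z, (‖κ z x‖₊ : ℝ≥0∞) ^ 2) ≤ N := by
    filter_upwards [hae1] with x hx
    have hx' : ∀ᵐ r : (EuclideanSpace ℝ (Fin d)), f r (x - (2:ℝ)⁻¹ • r) ≤ g r := by
      rw [ae_iff]
      simpa [not_le] using hx
    have hmeas_slice : Measurable fun z : EuclideanSpace ℝ (Fin d) => (‖κ z x‖₊ : ℝ≥0∞) ^ 2 :=
      ((hκ.comp (measurable_id.prodMk measurable_const)).enorm).pow_const 2
    have hchg : (∫⁻ z, (‖κ z x‖₊ : ℝ≥0∞) ^ 2) = ∫⁻ r, (‖κ (x - r) x‖₊ : ℝ≥0∞) ^ 2 :=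
      ((Measure.measurePreserving_sub_left volume x).lintegral_comp hmeas_slice).symm
    rw [hchg]
    have heq : ∀ r : (EuclideanSpace ℝ (Fin d)), (‖κ (x - r) x‖₊ : ℝ≥0∞) = f r (x - (2:ℝ)⁻¹ • r) := by
      intro r
      have h1 : x - (2:ℝ)⁻¹ • r - (2:ℝ)⁻¹ • r = x - r := by module
      have h2 : x - (2:ℝ)⁻¹ • r + (2:ℝ)⁻¹ • r = x := by module
      simp only [hf, h1, h2]
    calc ∫⁻ r, (‖κ (x - r) x‖₊ : ℝ≥0∞) ^ 2
        ≤ ∫⁻ r, (g r) ^ 2 := by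
          apply lintegral_mono_ae
          filter_upwards [hx'] with r hr
          rw [heq r]
          exact pow_le_pow_left' hr 2
      _ = N := rfl
  -- pointwise Cauchy–Schwarz bound for the exchange density
  have hpt : ∀ x : (EuclideanSpace ℝ (Fin d)),
      ((‖∫ z, ((starRingEnd ℂ) (Jκ z x) * κ z x +
          (starRingEnd ℂ) (κ z x) * Jκ z x)‖₊ : ℝ≥0∞)) ^ 2 ≤
      4 * (∫⁻ z, (‖κ z x‖₊ : ℝ≥0∞) ^ 2) * (∫⁻ z, (‖Jκ z x‖₊ : ℝ≥0∞) ^ 2) := by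
    intro x
    have hJm : Measurable fun z : EuclideanSpace ℝ (Fin d) => (‖Jκ z x‖₊ : ℝ≥0∞) :=
      (hJκ.comp (measurable_id.prodMk measurable_const)).enorm
    have hκm : Measurable fun z : EuclideanSpace ℝ (Fin d) => (‖κ z x‖₊ : ℝ≥0∞) :=
      (hκ.comp (measurable_id.prodMk measurable_const)).enorm
    set a : ℝ≥0∞ := ∫⁻ z, (‖Jκ z x‖₊ : ℝ≥0∞) ^ 2 with ha
    set b : ℝ≥0∞ := ∫⁻ z, (‖κ z x‖₊ : ℝ≥0∞) ^ 2 with hb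
    have hCS : (∫⁻ z, (‖Jκ z x‖₊ : ℝ≥0∞) * (‖κ z x‖₊ : ℝ≥0∞)) ≤
        a ^ (1/(2:ℝ)) * b ^ (1/(2:ℝ)) := by
      have h2 : ∀ c : ℝ≥0∞, c ^ ((2:ℕ) : ℝ) = c ^ (2:ℕ) := fun c => ENNReal.rpow_natCast c 2
      have := ENNReal.lintegral_mul_le_Lp_mul_Lq volume
        (Real.HolderConjugate.two_two : Real.HolderConjugate 2 2)
        hJm.aemeasurable hκm.aemeasurable
      calc (∫⁻ z, (‖Jκ z x‖₊ : ℝ≥0∞) * (‖κ z x‖₊ : ℝ≥0∞))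
          ≤ (∫⁻ z, (‖Jκ z x‖₊ : ℝ≥0∞) ^ (2:ℝ)) ^ (1/(2:ℝ)) *
            (∫⁻ z, (‖κ z x‖₊ : ℝ≥0∞) ^ (2:ℝ)) ^ (1/(2:ℝ)) := this
        _ = a ^ (1/(2:ℝ)) * b ^ (1/(2:ℝ)) := by
            rw [ha, hb]
            congr 1 <;>
              · congr 1
                refine lintegral_congr fun z => ?_
                rw [show (2:ℝ) = ((2:ℕ) : ℝ) by norm_num, h2]
    have h1 : ((‖∫ z, ((starRingEnd ℂ) (Jκ z x) * κ z x +
        (starRingEnd ℂ) (κ z x) * Jκ z x)‖₊ : ℝ≥0∞)) ≤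
        2 * (a ^ (1/(2:ℝ))) * (b ^ (1/(2:ℝ))) := by
      calc ((‖∫ z, ((starRingEnd ℂ) (Jκ z x) * κ z x +
            (starRingEnd ℂ) (κ z x) * Jκ z x)‖₊ : ℝ≥0∞))
          ≤ ∫⁻ z, (‖(starRingEnd ℂ) (Jκ z x) * κ z x +
            (starRingEnd ℂ) (κ z x) * Jκ z x‖₊ : ℝ≥0∞) :=
            enorm_integral_le_lintegral_enorm _
        _ ≤ ∫⁻ z, 2 * ((‖Jκ z x‖₊ : ℝ≥0∞) * (‖κ z x‖₊ : ℝ≥0∞)) := by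
            refine lintegral_mono fun z => ?_
            calc (‖(starRingEnd ℂ) (Jκ z x) * κ z x +
                (starRingEnd ℂ) (κ z x) * Jκ z x‖₊ : ℝ≥0∞)
                ≤ (‖(starRingEnd ℂ) (Jκ z x) * κ z x‖₊ : ℝ≥0∞) +
                  (‖(starRingEnd ℂ) (κ z x) * Jκ z x‖₊ : ℝ≥0∞) := by
                  exact_mod_cast nnnorm_add_le _ _
              _ = 2 * ((‖Jκ z x‖₊ : ℝ≥0∞) * (‖κ z x‖₊ : ℝ≥0∞)) := by
                  push_cast [nnnorm_mul, RCLike.nnnorm_conj]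
                  ring
        _ = 2 * ∫⁻ z, (‖Jκ z x‖₊ : ℝ≥0∞) * (‖κ z x‖₊ : ℝ≥0∞) :=
            lintegral_const_mul 2 (hJm.mul hκm)
        _ ≤ 2 * (a ^ (1/(2:ℝ)) * b ^ (1/(2:ℝ))) := mul_le_mul_right hCS 2
        _ = 2 * (a ^ (1/(2:ℝ))) * (b ^ (1/(2:ℝ))) := by ring
    have h2 := pow_le_pow_left' h1 2
    refine h2.trans_eq ?_
    have ha2 : (a ^ (1/(2:ℝ))) ^ (2:ℕ) = a := by
      rw [← ENNReal.rpow_natCast (a ^ (1/(2:ℝ))) 2, ← ENNReal.rpow_mul]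
      norm_num
    have hb2 : (b ^ (1/(2:ℝ))) ^ (2:ℕ) = b := by
      rw [← ENNReal.rpow_natCast (b ^ (1/(2:ℝ))) 2, ← ENNReal.rpow_mul]
      norm_num
    calc (2 * (a ^ (1/(2:ℝ))) * (b ^ (1/(2:ℝ)))) ^ (2:ℕ)
        = 4 * ((a ^ (1/(2:ℝ))) ^ (2:ℕ)) * ((b ^ (1/(2:ℝ))) ^ (2:ℕ)) := by ring
      _ = 4 * a * b := by rw [ha2, hb2]
      _ = 4 * b * a := by ring
  -- measurability of the HS-density of Jκ
  have hA : Measurable fun x : EuclideanSpace ℝ (Fin d) => ∫⁻ z, (‖Jκ z x‖₊ : ℝ≥0∞) ^ 2 :=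
    Measurable.lintegral_prod_left ((hJκ.enorm).pow_const 2)
  -- put everything together
  calc (∫⁻ x, (∫⁻ z, (‖κ z x‖₊ : ℝ≥0∞) ^ 2) ^ (2 * β - 1) *
        (‖∫ z, ((starRingEnd ℂ) (Jκ z x) * κ z x +
          (starRingEnd ℂ) (κ z x) * Jκ z x)‖₊ : ℝ≥0∞) ^ 2)
      ≤ ∫⁻ x, (4 * N ^ (2 * β)) * (∫⁻ z, (‖Jκ z x‖₊ : ℝ≥0∞) ^ 2) := by
        apply lintegral_mono_ae
        filter_upwards [hρ] with x hx
        calc (∫⁻ z, (‖κ z x‖₊ : ℝ≥0∞) ^ 2) ^ (2 * β - 1) *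
              (‖∫ z, ((starRingEnd ℂ) (Jκ z x) * κ z x +
                (starRingEnd ℂ) (κ z x) * Jκ z x)‖₊ : ℝ≥0∞) ^ 2
            ≤ (∫⁻ z, (‖κ z x‖₊ : ℝ≥0∞) ^ 2) ^ (2 * β - 1) *
              (4 * (∫⁻ z, (‖κ z x‖₊ : ℝ≥0∞) ^ 2) * (∫⁻ z, (‖Jκ z x‖₊ : ℝ≥0∞) ^ 2)) :=
              mul_le_mul_right (hpt x) _
          _ = 4 * ((∫⁻ z, (‖κ z x‖₊ : ℝ≥0∞) ^ 2) ^ (2 * β - 1) *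
                (∫⁻ z, (‖κ z x‖₊ : ℝ≥0∞) ^ 2) ^ (1:ℝ)) *
              (∫⁻ z, (‖Jκ z x‖₊ : ℝ≥0∞) ^ 2) := by
              rw [ENNReal.rpow_one]; ring
          _ = 4 * (∫⁻ z, (‖κ z x‖₊ : ℝ≥0∞) ^ 2) ^ (2 * β) *
              (∫⁻ z, (‖Jκ z x‖₊ : ℝ≥0∞) ^ 2) := by
              have hexp : 2 * β - 1 + 1 = 2 * β := by ring
              rw [← ENNReal.rpow_add_of_nonneg (2 * β - 1) 1 (by linarith) zero_le_one, hexp]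
          _ ≤ 4 * N ^ (2 * β) * (∫⁻ z, (‖Jκ z x‖₊ : ℝ≥0∞) ^ 2) := by
              exact mul_le_mul_left
                (mul_le_mul_right (ENNReal.rpow_le_rpow hx (by linarith)) 4) _
          _ = (4 * N ^ (2 * β)) * (∫⁻ z, (‖Jκ z x‖₊ : ℝ≥0∞) ^ 2) := rfl
    _ = (4 * N ^ (2 * β)) * ∫⁻ x, ∫⁻ z, (‖Jκ z x‖₊ : ℝ≥0∞) ^ 2 :=
        lintegral_const_mul _ hA
    _ = 4 * ((∫⁻ r, (eLpNorm (fun c => κ (c - (2:ℝ)⁻¹ • r) (c + (2:ℝ)⁻¹ • r)) ∞ volume) ^ 2) ^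
          (1/2 : ℝ)) ^ (4 * β) * ∫⁻ x, ∫⁻ z, (‖Jκ z x‖₊ : ℝ≥0∞) ^ 2 := by
        have hNeq : (∫⁻ r, (eLpNorm (fun c => κ (c - (2:ℝ)⁻¹ • r) (c + (2:ℝ)⁻¹ • r)) ∞
            volume) ^ 2) = N := rfl
        rw [hNeq, ← ENNReal.rpow_mul, (by ring : (1/2 : ℝ) * (4 * β) = 2 * β)]
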